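/- Apolarity for modules, local version: let k be a field, S := k[y₁,…,yₙ] with maximal ideal m := (y₁,…,yₙ), and F a free S-module of finite rank. The bijection K ↦ K^⊥, M ↦ M^⊥ of apolarity restricts to a bijection between (a) the set of cofinite S-submodules K ⊆ F such that m^D·F ⊆ K for some D ≥ 0 (equivalently, F/K is supported only at the origin), and (b) the set of finite-dimensional contraction-stable k-subspaces M ⊆ Hom_k(F,k) all of whose elements vanish on m^D·F for some D ≥ 0 (i.e. M lies in the restricted dual of F). -/

import Mathlib

variable (k : Type*) [Field k] (n : ℕ)
  (F : Type*) [AddCommGroup F] [Module (MvPolynomial (Fin n) k) F]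
  [Module k F] [IsScalarTower k (MvPolynomial (Fin n) k) F]

/-- Contraction: the `k`-linear endomorphism `f ↦ s • f` of `F`. -/
noncomputable def contrMul (s : MvPolynomial (Fin n) k) : F →ₗ[k] F :=
  (LinearMap.lsmul (MvPolynomial (Fin n) k) F s).restrictScalars k

/-- `K^⊥ = { φ ∈ Hom_k(F,k) : φ vanishes on K }`. -/
def dualAnn (K : Submodule (MvPolynomial (Fin n) k) F) : Submodule k (F →ₗ[k] k) where
  carrier := {φ | ∀ x ∈ K, φ x = 0}
  zero_mem' := by intro x hx; simp
  add_mem' := by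
    intro a b ha hb x hx
    simp [ha x hx, hb x hx]
  smul_mem' := by
    intro c φ hφ x hx
    simp [hφ x hx]

/-- `M^⊥ = { f ∈ F : φ(f) = 0 for all φ ∈ M }` as a subset of `F`. -/
def perpSet (M : Submodule k (F →ₗ[k] k)) : Set F := {f | ∀ φ ∈ M, φ f = 0}

/-- A subspace `M ⊆ Hom_k(F,k)` is contraction-stable if it is closed under
`φ ↦ (f ↦ φ(s·f))` for all `s ∈ S`. -/
def ContractionStable (M : Submodule k (F →ₗ[k] k)) : Prop :=
  ∀ (s : MvPolynomial (Fin n) k), ∀ φ ∈ M, φ.comp (contrMul k n F s) ∈ M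

/-- The irrelevant maximal ideal `m = (y₁,…,yₙ)` of `S = k[y₁,…,yₙ]`. -/
noncomputable def irrIdeal : Ideal (MvPolynomial (Fin n) k) :=
  Ideal.span (Set.range (MvPolynomial.X : Fin n → MvPolynomial (Fin n) k))

/-- apolarity for modules, local version: the apolarity bijection
restricts to a bijection between cofinite submodules `K ⊆ F` containing `m^D·F` for some
`D` (quotients supported at the origin) and finite-dimensional contraction-stable
subspaces of the restricted dual, i.e. those all of whose elements vanish on `m^D·F` for
some `D`. -/
theorem apolarity_local [Module.Free (MvPolynomial (Fin n) k) F]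
    [Module.Finite (MvPolynomial (Fin n) k) F] :
    (∀ K : Submodule (MvPolynomial (Fin n) k) F, FiniteDimensional k (F ⧸ K) →
        ((∃ D : ℕ, (irrIdeal k n) ^ D • (⊤ : Submodule (MvPolynomial (Fin n) k) F) ≤ K) ↔
          (∃ D : ℕ, ∀ φ ∈ dualAnn k n F K,
            ∀ f ∈ (irrIdeal k n) ^ D • (⊤ : Submodule (MvPolynomial (Fin n) k) F),
              φ f = 0))) ∧
      (∀ M : Submodule k (F →ₗ[k] k), FiniteDimensional k M → ContractionStable k n F M →
        (∃ D : ℕ, ∀ φ ∈ M,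
            ∀ f ∈ (irrIdeal k n) ^ D • (⊤ : Submodule (MvPolynomial (Fin n) k) F),
              φ f = 0) →
          ∃ K : Submodule (MvPolynomial (Fin n) k) F,
            (K : Set F) = perpSet k F M ∧ FiniteDimensional k (F ⧸ K) ∧
              (∃ D : ℕ, (irrIdeal k n) ^ D • (⊤ : Submodule (MvPolynomial (Fin n) k) F) ≤ K) ∧
              dualAnn k n F K = M) := by
  classical
  constructor
  · intro K _hfd
    constructor
    · rintro ⟨D, hD⟩
      exact ⟨D, fun φ hφ f hf => hφ f (hD hf)⟩
    · rintro ⟨D, hD⟩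
      refine ⟨D, fun f hf => ?_⟩
      set K' : Submodule k F := K.restrictScalars k with hK'
      have hmem : ∀ ψ : Module.Dual k (F ⧸ K'), ψ (K'.mkQ f) = 0 := by
        intro ψ
        refine hD (ψ.comp K'.mkQ) ?_ f hf
        intro x hx
        have : K'.mkQ x = 0 := (Submodule.Quotient.mk_eq_zero K').mpr hx
        simp [this]
      have := (Module.forall_dual_apply_eq_zero_iff k (K'.mkQ f)).mp hmem
      rwa [Submodule.mkQ_apply, Submodule.Quotient.mk_eq_zero] at this
  · intro M hMfin hMstab hMvan
    let K : Submodule (MvPolynomial (Fin n) k) F :=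
      { carrier := perpSet k F M
        zero_mem' := by intro φ hφ; simp
        add_mem' := by intro a b ha hb φ hφ; simp [ha φ hφ, hb φ hφ]
        smul_mem' := by
          intro s f hf φ hφ
          have : φ.comp (contrMul k n F s) ∈ M := hMstab s φ hφ
          exact hf _ this }
    have hKcar : (K : Set F) = perpSet k F M := rfl
    -- evaluation map into the dual of M
    let ev : F →ₗ[k] (M →ₗ[k] k) :=
      { toFun := fun f =>
          { toFun := fun φ => (φ : F →ₗ[k] k) f
            map_add' := by intro a b; rfl
            map_smul' := by intro c a; rfl }
        map_add' := by intro x y; ext φ; simp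
        map_smul' := by intro c x; ext φ; simp }
    have hker : LinearMap.ker ev = K.restrictScalars k := by
      ext f
      constructor
      · intro hf φ hφ
        have := congrArg (fun g : M →ₗ[k] k => g ⟨φ, hφ⟩) hf
        simpa [ev] using this
      · intro hf
        ext φ
        exact hf φ.1 φ.2
    have hfd : FiniteDimensional k (F ⧸ K.restrictScalars k) := by
      have hle : K.restrictScalars k ≤ LinearMap.ker ev := hker.ge
      have hinj : Function.Injective ((K.restrictScalars k).liftQ ev hle) := by
        rw [← LinearMap.ker_eq_bot, Submodule.ker_liftQ_eq_bot' _ _ hker.symm]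
      haveI : Module.Free k M := Module.Free.of_divisionRing k M
      haveI : FiniteDimensional k (M →ₗ[k] k) := Module.Finite.linearMap k k M k
      exact FiniteDimensional.of_injective _ hinj
    have hfd' : FiniteDimensional k (F ⧸ K) :=
      Module.Finite.equiv (Submodule.Quotient.restrictScalarsEquiv k K)
    refine ⟨K, hKcar, hfd', ?_, ?_⟩
    · obtain ⟨D, hD⟩ := hMvan
      exact ⟨D, fun f hf φ hφ => hD φ hφ f hf⟩
    · apply le_antisymm
      · intro ψ hψ
        -- ψ vanishes on perpSet M; use finite spanning set of M
        obtain ⟨s, hs⟩ : M.FG := (Module.Finite.iff_fg (N := M)).mp hMfin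
        have hL : Set.range (fun i : s => (i : F →ₗ[k] k)) = (s : Set (F →ₗ[k] k)) :=
          Subtype.range_coe
        have hspan : Submodule.span k (Set.range (fun i : s => (i : F →ₗ[k] k))) = M := by
          rw [hL, hs]
        have hker' : (⨅ i : s, LinearMap.ker (i : F →ₗ[k] k)) ≤ LinearMap.ker ψ := by
          intro f hf
          have hperp : f ∈ perpSet k F M := by
            intro φ hφ
            have hsub : (s : Set (F →ₗ[k] k)) ⊆ ↑(LinearMap.ker ((LinearMap.applyₗ : F →ₗ[k] (F →ₗ[k] k) →ₗ[k] k) f)) := by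
              intro x hx
              exact Submodule.mem_iInf _ |>.mp hf ⟨x, hx⟩
            have : M ≤ LinearMap.ker ((LinearMap.applyₗ : F →ₗ[k] (F →ₗ[k] k) →ₗ[k] k) f) := by
              rw [← hs]; exact Submodule.span_le.mpr hsub
            exact this hφ
          exact hψ f hperp
        have := mem_span_of_iInf_ker_le_ker hker'
        rwa [hspan] at this
      · intro φ hφ f hf
        exact hf φ hφ
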